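/- Let A = ℤ⟨X,Y⟩. Then for every c ∈ A, the element X²Y² − c² does not lie in the additive subgroup 2A + [A,A] + F⁵A. -/

import Mathlib

/-- Words in the two letters `X, Y`. -/
abbrev FW := FreeMonoid (Fin 2)

/-- `A = ℤ⟨X,Y⟩`, the free associative unital ring on two non-commuting variables,
realized as the monoid algebra of the free monoid on two letters. -/
abbrev A2 := MonoidAlgebra ℤ FW

/-- The variable `X`. -/
noncomputable def Xv : A2 := MonoidAlgebra.of ℤ FW (FreeMonoid.of 0)

/-- The variable `Y`. -/
noncomputable def Yv : A2 := MonoidAlgebra.of ℤ FW (FreeMonoid.of 1)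

/-- The set `2A`. -/
def twoA : Set A2 := {x | ∃ a : A2, x = 2 * a}

/-- The set of commutators of `A`, generating `[A,A]`. -/
def commA : Set A2 := {x | ∃ a b : A2, x = a * b - b * a}

/-- The words of length `≥ n`; they generate `FⁿA = ⊕_{i≥n} A_i` as an additive group. -/
def FdegSet (n : ℕ) : Set A2 :=
  {x | ∃ w : FW, n ≤ w.length ∧ x = MonoidAlgebra.of ℤ FW w}

/-- The cyclic class of the word `XXYY`, as lists. -/
def Sl : Finset (List (Fin 2)) := {[0,0,1,1], [0,1,1,0], [1,1,0,0], [1,0,0,1]}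

lemma Sl_rot1 : ∀ l ∈ Sl, l.rotate 1 ∈ Sl := by decide

lemma Sl_rot (n : ℕ) : ∀ l ∈ Sl, l.rotate n ∈ Sl := by
  induction n with
  | zero => intro l hl; simpa using hl
  | succ n ih =>
      intro l hl
      have : l.rotate (n + 1) = (l.rotate 1).rotate n := by
        rw [List.rotate_rotate, Nat.add_comm]
      rw [this]
      exact ih _ (Sl_rot1 l hl)

lemma Sl_len : ∀ l ∈ Sl, l.length = 4 := by decide

lemma Sl_swap {u v : List (Fin 2)} (h : u ++ v ∈ Sl) : v ++ u ∈ Sl := by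
  have hle : u.length ≤ (u ++ v).length := by simp
  have : (u ++ v).rotate u.length = v ++ u := by
    rw [List.rotate_eq_drop_append_take hle, List.drop_left, List.take_left]
  rw [← this]
  exact Sl_rot _ _ h

lemma Sl_not_sq (u : List (Fin 2)) : u ++ u ∉ Sl := by
  intro h
  have h4 := Sl_len _ h
  simp only [List.length_append] at h4
  have h2 : u.length = 2 := by omega
  match u, h2 with
  | [a, b], _ =>
    revert h; revert a b; decide

/-- indicator of the cyclic class. -/
noncomputable def ind (w : FW) : ZMod 2 := if FreeMonoid.toList w ∈ Sl then 1 else 0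

/-- The additive functional. -/
noncomputable def φ : A2 →+ ZMod 2 :=
  (Finsupp.liftAddHom fun w => (AddMonoidHom.mulRight (ind w)).comp (Int.castAddHom (ZMod 2))).comp
    MonoidAlgebra.coeffAddEquiv.toAddMonoidHom

lemma phi_single (w : FW) (c : ℤ) : φ (MonoidAlgebra.single w c) = (c : ZMod 2) * ind w :=
  Finsupp.liftAddHom_apply_single _ _ _

lemma ind_mul_comm (u v : FW) : ind (u * v) = ind (v * u) := by
  unfold ind
  rw [FreeMonoid.toList_mul, FreeMonoid.toList_mul]
  by_cases h : FreeMonoid.toList u ++ FreeMonoid.toList v ∈ Sl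
  · rw [if_pos h, if_pos (Sl_swap h)]
  · rw [if_neg h, if_neg (fun h' => h (Sl_swap h'))]

lemma phi_mul (a b : A2) :
    φ (a * b) = ∑ u ∈ a.coeff.support, ∑ v ∈ b.coeff.support,
      ((a.coeff u : ZMod 2)) * ((b.coeff v : ZMod 2)) * ind (u * v) := by
  rw [MonoidAlgebra.mul_def, Finsupp.sum, map_sum]
  refine Finset.sum_congr rfl fun u _ => ?_
  rw [Finsupp.sum, map_sum]
  refine Finset.sum_congr rfl fun v _ => ?_
  rw [phi_single]
  push_cast
  ring

lemma phi_comm (a b : A2) : φ (a * b) = φ (b * a) := by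
  rw [phi_mul, phi_mul, Finset.sum_comm]
  exact Finset.sum_congr rfl fun v _ => Finset.sum_congr rfl fun u _ => by
    rw [ind_mul_comm]; ring

lemma zmod2_add_self (x : ZMod 2) : x + x = 0 := by
  have : ∀ y : ZMod 2, y + y = 0 := by decide
  exact this x

lemma phi_sq (c : A2) : φ (c * c) = 0 := by
  rw [phi_mul, ← Finset.sum_product']
  refine Finset.sum_involution (fun p _ => p.swap) ?_ ?_ ?_ ?_
  · intro p _
    have : ((c.coeff p.swap.1 : ZMod 2)) * ((c.coeff p.swap.2 : ZMod 2)) * ind (p.swap.1 * p.swap.2)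
        = ((c.coeff p.1 : ZMod 2)) * ((c.coeff p.2 : ZMod 2)) * ind (p.1 * p.2) := by
      simp only [Prod.fst_swap, Prod.snd_swap]
      rw [ind_mul_comm]; ring
    rw [this]
    exact zmod2_add_self _
  · intro p _ hf he
    apply hf
    have h12 : p.1 = p.2 := by
      have := congrArg Prod.fst he
      exact (by simpa using this : p.2 = p.1).symm
    rw [h12]
    unfold ind
    rw [FreeMonoid.toList_mul, if_neg (Sl_not_sq _), mul_zero]
  · intro p hp
    rw [Finset.mem_product] at hp ⊢
    exact ⟨hp.2, hp.1⟩
  · intro p _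
    exact Prod.swap_swap p

lemma phi_XY : φ (Xv ^ 2 * Yv ^ 2) = 1 := by
  have h : Xv ^ 2 * Yv ^ 2 =
      MonoidAlgebra.single (FreeMonoid.of 0 * FreeMonoid.of 0 * (FreeMonoid.of 1 * FreeMonoid.of 1)) 1 := by
    rw [pow_two, pow_two]
    show MonoidAlgebra.single _ (1:ℤ) * MonoidAlgebra.single _ 1 *
      (MonoidAlgebra.single _ 1 * MonoidAlgebra.single _ 1) = _
    rw [MonoidAlgebra.single_mul_single, MonoidAlgebra.single_mul_single,
      MonoidAlgebra.single_mul_single]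
    norm_num
  rw [h, phi_single]
  have : ind (FreeMonoid.of 0 * FreeMonoid.of 0 * (FreeMonoid.of 1 * FreeMonoid.of 1)) = 1 := by
    unfold ind
    rw [if_pos]
    decide
  rw [this]
  norm_num


/-- for every `c ∈ ℤ⟨X,Y⟩`, `X²Y² − c²` does not lie in `2A + [A,A] + F⁵A`
(the additive subgroup generated by `2A`, commutators, and words of length `≥ 5`). -/
theorem stmt4 (c : A2) :
    Xv ^ 2 * Yv ^ 2 - c ^ 2 ∉ AddSubgroup.closure (twoA ∪ commA ∪ FdegSet 5) := by
  intro hmem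
  have hsub : AddSubgroup.closure (twoA ∪ commA ∪ FdegSet 5) ≤ φ.ker := by
    rw [AddSubgroup.closure_le]
    rintro x ((⟨a, rfl⟩ | ⟨a, b, rfl⟩) | ⟨w, hw, rfl⟩)
    · simp only [AddMonoidHom.mem_ker, SetLike.mem_coe]
      rw [two_mul, map_add]
      exact zmod2_add_self _
    · simp only [AddMonoidHom.mem_ker, SetLike.mem_coe]
      rw [map_sub, phi_comm, sub_self]
    · simp only [AddMonoidHom.mem_ker, SetLike.mem_coe]
      show φ (MonoidAlgebra.single w 1) = 0
      rw [phi_single]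
      have : ind w = 0 := by
        unfold ind
        rw [if_neg]
        intro hmem'
        have h4 := Sl_len _ hmem'
        have : w.length = (FreeMonoid.toList w).length := rfl
        omega
      rw [this, mul_zero]
  have h0 : φ (Xv ^ 2 * Yv ^ 2 - c ^ 2) = 0 := hsub hmem
  rw [map_sub, phi_XY, pow_two, phi_sq, sub_zero] at h0
  exact one_ne_zero h0
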